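/- arXiv:1102.5633 — 2 statements merged into one kernel-verified Lean document; each statement's English description precedes it below -/
import Mathlib

section
/- There exists a constant e_3 > 0, depending only on d (one may take e_3 = min{2^{−d}, 2^{−2d} d^{−d/2}}), such that for all u, v ∈ [0,1]^d, vol[G(u,v)] ≥ e_3 · vol[H(u,v)]. -/
open MeasureTheory Finset

/-- The unit cube `[0,1]^d` in `ℝ^d`. -/
def unitCube (d : ℕ) : Set (EuclideanSpace ℝ (Fin d)) :=
  WithLp.ofLp ⁻¹' Set.univ.pi fun _ => Set.Icc (0 : ℝ) 1

/-- `H(u,v)`: the closed Euclidean ball centered at `u` of radius `‖v - u‖`. -/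
def Hset {d : ℕ} (u v : EuclideanSpace ℝ (Fin d)) : Set (EuclideanSpace ℝ (Fin d)) :=
  Metric.closedBall u ‖v - u‖

/-- `G(u,v) = H(u,v) ∩ [0,1]^d`. -/
def Gset {d : ℕ} (u v : EuclideanSpace ℝ (Fin d)) : Set (EuclideanSpace ℝ (Fin d)) :=
  Hset u v ∩ unitCube d

/-- A box in Euclidean space, with the type fixed to avoid instance ambiguity. -/
def eBox {d : ℕ} (a b : Fin d → ℝ) : Set (EuclideanSpace ℝ (Fin d)) :=
  WithLp.ofLp ⁻¹' Set.univ.pi fun i => Set.Icc (a i) (b i)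

lemma mem_eBox {d : ℕ} {a b : Fin d → ℝ} {x : EuclideanSpace ℝ (Fin d)} :
    x ∈ eBox a b ↔ ∀ i, a i ≤ x i ∧ x i ≤ b i := by
  simp only [eBox, Set.mem_preimage, Set.mem_pi, Set.mem_univ, forall_true_left, Set.mem_Icc]

lemma euclid_vol_eBox {d : ℕ} (a b : Fin d → ℝ) :
    volume (eBox a b) = ∏ i, ENNReal.ofReal (b i - a i) := by
  have h := (EuclideanSpace.volume_preserving_symm_measurableEquiv_toLp (Fin d)).measure_preimage
    (s := Set.univ.pi fun i => Set.Icc (a i) (b i))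
    (MeasurableSet.univ_pi (fun i => measurableSet_Icc)).nullMeasurableSet
  have heq : (MeasurableEquiv.toLp 2 (Fin d → ℝ)).symm ⁻¹'
      (Set.univ.pi fun i => Set.Icc (a i) (b i)) = eBox a b := rfl
  rw [heq] at h
  rw [h, volume_pi_pi]
  simp [Real.volume_Icc]

lemma unitCube_eq_eBox (d : ℕ) : unitCube d = eBox (fun _ => 0) (fun _ => 1) := rfl

/-- coordinate bound in Euclidean space -/
lemma euclid_coord_le_norm {d : ℕ} (y : EuclideanSpace ℝ (Fin d)) (i : Fin d) :
    |y i| ≤ ‖y‖ := by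
  rw [EuclideanSpace.norm_eq, ← Real.sqrt_sq_eq_abs]
  apply Real.sqrt_le_sqrt
  have := Finset.single_le_sum (f := fun j => ‖y j‖ ^ 2)
    (fun j _ => by positivity) (Finset.mem_univ i)
  simpa [Real.norm_eq_abs, sq_abs] using this

/-- Lemma: with `e₃ := min{2^{-d}, 2^{-2d} d^{-d/2}} > 0` (a constant depending
only on `d`), for all `u, v ∈ [0,1]^d` one has `vol[G(u,v)] ≥ e₃ · vol[H(u,v)]`. -/
theorem Gset_volume_lower_bound (d : ℕ) (hd : 0 < d) :
    0 < min (((2 : ℝ) ^ d)⁻¹) ((2 : ℝ) ^ (-(2 * (d : ℝ))) * (d : ℝ) ^ (-((d : ℝ) / 2))) ∧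
      ∀ u ∈ unitCube d, ∀ v ∈ unitCube d,
        min (((2 : ℝ) ^ d)⁻¹) ((2 : ℝ) ^ (-(2 * (d : ℝ))) * (d : ℝ) ^ (-((d : ℝ) / 2))) *
            (volume (Hset u v)).toReal ≤ (volume (Gset u v)).toReal := by
  have hd0 : (0:ℝ) < d := by exact_mod_cast hd
  have hd1 : (1:ℝ) ≤ d := by exact_mod_cast hd
  set t : ℝ := Real.sqrt d with ht
  have ht1 : (1:ℝ) ≤ t := by
    rw [ht, show (1:ℝ) = Real.sqrt 1 by simp]
    exact Real.sqrt_le_sqrt hd1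
  have ht0 : (0:ℝ) < t := lt_of_lt_of_le one_pos ht1
  set c := min (((2 : ℝ) ^ d)⁻¹) ((2 : ℝ) ^ (-(2 * (d : ℝ))) * (d : ℝ) ^ (-((d : ℝ) / 2))) with hc
  have hC2 : (2 : ℝ) ^ (-(2 * (d : ℝ))) * (d : ℝ) ^ (-((d : ℝ) / 2))
      = ((2:ℝ)^d)⁻¹ * ((2:ℝ)^d)⁻¹ * (t^d)⁻¹ := by
    have h1 : (2 : ℝ) ^ (-(2 * (d : ℝ))) = (((2:ℝ)^(2*d) : ℝ))⁻¹ := by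
      rw [Real.rpow_neg (by norm_num)]
      congr 1
      rw [← Real.rpow_natCast (2:ℝ) (2*d)]
      push_cast
      ring_nf
    have h2 : (d : ℝ) ^ (-((d : ℝ) / 2)) = (t^d)⁻¹ := by
      rw [Real.rpow_neg hd0.le]
      congr 1
      rw [ht, Real.sqrt_eq_rpow, ← Real.rpow_natCast ((d:ℝ) ^ ((1:ℝ)/2)) d,
        ← Real.rpow_mul hd0.le]
      congr 1
      ring
    rw [h1, h2, two_mul, pow_add, mul_inv]
  have hcpos : 0 < c := by
    rw [hc]
    apply lt_min
    · positivity
    · exact mul_pos (Real.rpow_pos_of_pos two_pos _) (Real.rpow_pos_of_pos hd0 _)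
  refine ⟨hcpos, ?_⟩
  intro u hu v hv
  set r : ℝ := ‖v - u‖ with hrdef
  have hr0 : 0 ≤ r := norm_nonneg _
  have hcoords : ∀ i, |v i - u i| ≤ 1 := by
    intro i
    have h1 := (show ∀ i ∈ Set.univ, u i ∈ Set.Icc (0:ℝ) 1 from hu) i (Set.mem_univ i)
    have h2 := (show ∀ i ∈ Set.univ, v i ∈ Set.Icc (0:ℝ) 1 from hv) i (Set.mem_univ i)
    simp only [Set.mem_Icc] at h1 h2
    rw [abs_le]; constructor <;> linarith [h1.1, h1.2, h2.1, h2.2]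
  have hrt : r ≤ t := by
    rw [hrdef, EuclideanSpace.norm_eq, ht]
    apply Real.sqrt_le_sqrt
    have hterm : ∀ i : Fin d, ‖(v - u) i‖ ^ 2 ≤ 1 := by
      intro i
      have hco : (v - u) i = v i - u i := rfl
      rw [hco, Real.norm_eq_abs, sq_abs]
      nlinarith [hcoords i, abs_nonneg (v i - u i), sq_abs (v i - u i)]
    calc ∑ i, ‖(v - u) i‖ ^ 2 ≤ ∑ _i : Fin d, (1:ℝ) :=
          Finset.sum_le_sum fun i _ => hterm i
      _ = d := by simp
  set s : ℝ := r / t with hs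
  have hs0 : 0 ≤ s := div_nonneg hr0 ht0.le
  have hs1 : s ≤ 1 := by
    rw [hs, div_le_one ht0]; exact hrt
  have hst : s * t = r := div_mul_cancel₀ r ht0.ne'
  set a : Fin d → ℝ := fun i => min (u i) (1 - s) with ha
  have hbox : eBox a (fun i => a i + s) ⊆ Gset u v := by
    intro x hx
    rw [mem_eBox] at hx
    have hui : ∀ i, a i ≤ u i ∧ u i ≤ a i + s := by
      intro i
      refine ⟨min_le_left _ _, ?_⟩
      have hu1 : u i ≤ 1 := ((show ∀ i ∈ Set.univ, u i ∈ Set.Icc (0:ℝ) 1 from hu) i (Set.mem_univ i)).2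
      rcases le_total (u i) (1 - s) with h | h
      · rw [ha]; simp only [min_eq_left h]; linarith
      · rw [ha]; simp only [min_eq_right h]; linarith
    constructor
    · -- x ∈ Hset u v
      unfold Hset
      rw [Metric.mem_closedBall, dist_eq_norm, ← hrdef, EuclideanSpace.norm_eq]
      have hterm : ∀ i : Fin d, ‖(x - u) i‖ ^ 2 ≤ s ^ 2 := by
        intro i
        have hco : (x - u) i = x i - u i := rfl
        rw [hco, Real.norm_eq_abs, sq_abs]
        have hxui : |x i - u i| ≤ s := by
          rw [abs_le]
          constructor
          · linarith [(hx i).1, (hui i).2]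
          · linarith [(hx i).2, (hui i).1]
        nlinarith [abs_nonneg (x i - u i), sq_abs (x i - u i)]
      have hsum : ∑ i, ‖(x - u) i‖ ^ 2 ≤ (d:ℝ) * s ^ 2 := by
        calc ∑ i, ‖(x - u) i‖ ^ 2 ≤ ∑ _i : Fin d, s ^ 2 :=
              Finset.sum_le_sum fun i _ => hterm i
          _ = (d:ℝ) * s ^ 2 := by simp [mul_comm]
      calc Real.sqrt (∑ i, ‖(x - u) i‖ ^ 2) ≤ Real.sqrt ((d:ℝ) * s ^ 2) :=
            Real.sqrt_le_sqrt hsum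
        _ = t * s := by rw [Real.sqrt_mul hd0.le, Real.sqrt_sq hs0, ← ht]
        _ = r := by rw [mul_comm]; exact hst
    · -- x ∈ unitCube d
      show ∀ i ∈ Set.univ, x i ∈ Set.Icc (0:ℝ) 1
      intro i _
      have h0a : 0 ≤ a i := by
        rw [ha]
        exact le_min ((show ∀ i ∈ Set.univ, u i ∈ Set.Icc (0:ℝ) 1 from hu) i (Set.mem_univ i)).1 (by linarith)
      have has : a i + s ≤ 1 := by
        have : a i ≤ 1 - s := min_le_right _ _
        linarith
      exact ⟨by linarith [(hx i).1], by linarith [(hx i).2]⟩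
  have hbig : Hset u v ⊆ eBox (fun i => u i - r) (fun i => u i + r) := by
    intro x hx
    rw [mem_eBox]
    intro i
    have hxn : ‖x - u‖ ≤ r := by
      rw [← dist_eq_norm]; exact hx
    have hcn := euclid_coord_le_norm (x - u) i
    have hco : (x - u) i = x i - u i := rfl
    rw [hco] at hcn
    have hxi : |x i - u i| ≤ r := le_trans hcn hxn
    rw [abs_le] at hxi
    constructor <;> linarith [hxi.1, hxi.2]
  have hvolG_lb : ENNReal.ofReal (s ^ d) ≤ volume (Gset u v) := by
    have hm := measure_mono (μ := (volume : Measure (EuclideanSpace ℝ (Fin d)))) hbox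
    rw [euclid_vol_eBox] at hm
    simpa [ENNReal.ofReal_pow hs0] using hm
  have hvolH_ub : volume (Hset u v) ≤ ENNReal.ofReal ((2*r) ^ d) := by
    have hm := measure_mono (μ := (volume : Measure (EuclideanSpace ℝ (Fin d)))) hbig
    rw [euclid_vol_eBox] at hm
    have h2r : ∀ i : Fin d, u i + r - (u i - r) = 2 * r := fun i => by ring
    simp only [h2r] at hm
    rw [Finset.prod_const, Finset.card_univ, Fintype.card_fin,
      ← ENNReal.ofReal_pow (by positivity)] at hm
    exact hm
  have hGfin : volume (Gset u v) ≠ ⊤ := by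
    have h1 : Gset u v ⊆ unitCube d := Set.inter_subset_right
    have h2 : volume (unitCube d) = 1 := by
      rw [unitCube_eq_eBox, euclid_vol_eBox]
      simp
    exact ne_top_of_le_ne_top (by rw [h2]; exact ENNReal.one_ne_top) (measure_mono h1)
  have hGreal : s ^ d ≤ (volume (Gset u v)).toReal := by
    have := ENNReal.toReal_mono hGfin hvolG_lb
    rwa [ENNReal.toReal_ofReal (by positivity)] at this
  have hHreal : (volume (Hset u v)).toReal ≤ (2*r) ^ d :=
    ENNReal.toReal_le_of_le_ofReal (by positivity) hvolH_ub
  have hcle : c ≤ ((2:ℝ)^d)⁻¹ * ((2:ℝ)^d)⁻¹ * (t^d)⁻¹ := by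
    rw [hc, ← hC2]; exact min_le_right _ _
  have key : c * (2*r) ^ d ≤ s ^ d := by
    have h2d : (0:ℝ) < (2:ℝ)^d := by positivity
    have htd : (0:ℝ) < t^d := by positivity
    have hsd : s ^ d = r ^ d * (t^d)⁻¹ := by
      rw [hs, div_pow, div_eq_mul_inv]
    rw [hsd, mul_pow]
    calc c * ((2:ℝ)^d * r^d)
        ≤ (((2:ℝ)^d)⁻¹ * ((2:ℝ)^d)⁻¹ * (t^d)⁻¹) * ((2:ℝ)^d * r^d) :=
          mul_le_mul_of_nonneg_right hcle (by positivity)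
      _ = ((2:ℝ)^d)⁻¹ * (r ^ d * (t^d)⁻¹) := by field_simp
      _ ≤ 1 * (r ^ d * (t^d)⁻¹) := by
          apply mul_le_mul_of_nonneg_right _ (by positivity)
          rw [inv_le_one_iff₀]; right; exact one_le_pow₀ (by norm_num)
      _ = r ^ d * (t^d)⁻¹ := one_mul _
  calc c * (volume (Hset u v)).toReal ≤ c * (2*r)^d :=
        mul_le_mul_of_nonneg_left hHreal hcpos.le
    _ ≤ s ^ d := key
    _ ≤ (volume (Gset u v)).toReal := hGreal
end

section
/- Let 1 < p ≤ 2 and C > 0, let m : ℝ^d → ℝ be (p,C)-smooth, let m_s denote the partial derivative of m with respect to the s-th coordinate, and let L > 0 satisfy max_{1 ≤ s ≤ d} sup_{x ∈ [0,1]^d} |m_s(x)| ≤ L. Then for any x, z_1, …, z_k ∈ [0,1]^d, ( Σ_{i=1}^k (m(z_i) − m(x)) )² ≤ 2kdC² Σ_{i=1}^k ‖z_i − x‖^{2p} + 2dL² Σ_{i=1}^k ‖z_i − x‖² + 2dL² Σ_{s=1}^d Σ_{1 ≤ i ≠ j ≤ k} (z_i^{(s)} − x^{(s)})(z_j^{(s)}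 − x^{(s)}), where the superscript (s) denotes the s-th coordinate. -/
open MeasureTheory Finset

/-- The permutation rearranging `X 0, …, X (n-1)` in ascending order of distance to `x`,
with ties broken by index: `X (nnPerm x X 0)` is the nearest neighbor of `x`, etc. -/
noncomputable def nnPerm {d n : ℕ} (x : EuclideanSpace ℝ (Fin d))
    (X : Fin n → EuclideanSpace ℝ (Fin d)) : Equiv.Perm (Fin n) :=
  Tuple.sort (fun i => toLex (‖X i - x‖, i))

/-- The indices `{0, …, k-1}` as a finset of `Fin n`. -/
def firstK (n k : ℕ) : Finset (Fin n) := Finset.univ.filter fun i => (i : ℕ) < k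

variable {d : ℕ}
local notation "E" => EuclideanSpace ℝ (Fin d)

lemma hd_all (m : E → ℝ) (g : Fin d → E → ℝ)
    (hderiv : ∀ (s : Fin d) (x : E), HasLineDerivAt ℝ m (g s x) x (EuclideanSpace.single s 1))
    (s : Fin d) (w : E) (t₀ : ℝ) :
    HasDerivAt (fun t : ℝ => m (w + t • EuclideanSpace.single s 1))
      (g s (w + t₀ • EuclideanSpace.single s 1)) t₀ := by
  set e := EuclideanSpace.single s (1:ℝ) with he
  have h1 : HasDerivAt (fun u : ℝ => m ((w + t₀ • e) + u • e)) (g s (w + t₀ • e)) 0 :=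
    hderiv s (w + t₀ • e)
  have h1' : HasDerivAt (fun u : ℝ => m ((w + t₀ • e) + u • e)) (g s (w + t₀ • e)) (t₀ - t₀) := by
    rwa [sub_self]
  have hsub : HasDerivAt (fun t : ℝ => t - t₀) 1 t₀ := (hasDerivAt_id t₀).sub_const t₀
  have h2 := HasDerivAt.comp (h := fun t : ℝ => t - t₀) t₀ h1' hsub
  simp only [Function.comp_def, mul_one] at h2
  have heq : (fun t : ℝ => m (w + t • e)) = (fun x : ℝ => m (w + t₀ • e + (x - t₀) • e)) := by
    funext t
    congr 1
    module
  rw [heq]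
  exact h2

lemma key_step (m : E → ℝ) (g : Fin d → E → ℝ)
    (hderiv : ∀ (s : Fin d) (x : E), HasLineDerivAt ℝ m (g s x) x (EuclideanSpace.single s 1))
    (s : Fin d) (w : E) (v : ℝ) :
    ∃ c : ℝ, c ^ 2 ≤ v ^ 2 ∧
      m (w + v • EuclideanSpace.single s 1) - m w
        = v * g s (w + c • EuclideanSpace.single s 1) := by
  set e := EuclideanSpace.single s (1:ℝ) with he
  have hd := hd_all m g hderiv s w
  rcases eq_or_ne v 0 with hv | hv
  · exact ⟨0, by nlinarith [sq_nonneg v], by simp [hv]⟩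
  · set h : ℝ → ℝ := fun t => m (w + t • e) with hh
    have hab : min 0 v < max 0 v := by
      rcases lt_or_gt_of_ne hv with h' | h'
      · simpa [min_eq_left h'.le, max_eq_right (le_of_lt h'), max_eq_left h'.le] using h'
      · simp [min_eq_left h'.le, max_eq_right h'.le, h']
    obtain ⟨c, hc, hceq⟩ := exists_hasDerivAt_eq_slope h (fun t => g s (w + t • e)) hab
      (fun t _ => (hd t).continuousAt.continuousWithinAt) (fun t _ => hd t)
    refine ⟨c, ?_, ?_⟩
    · rcases lt_or_gt_of_ne hv with h' | h'
      · rw [min_eq_right h'.le, max_eq_left h'.le] at hc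
        nlinarith [hc.1, hc.2]
      · rw [min_eq_left h'.le, max_eq_right h'.le] at hc
        nlinarith [hc.1, hc.2]
    · have h0 : h 0 = m w := by simp [hh]
      have hv' : h v = m (w + v • e) := rfl
      rcases lt_or_gt_of_ne hv with h' | h'
      · rw [min_eq_right h'.le, max_eq_left h'.le] at hceq
        rw [← hv', ← h0, hceq]
        rw [← mul_div_assoc, zero_sub, div_neg, mul_comm v (h 0 - h v), mul_div_assoc, div_self hv, mul_one, neg_sub]
      · rw [min_eq_left h'.le, max_eq_right h'.le] at hceq
        rw [← hv', ← h0, hceq]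
        field_simp
        ring

lemma key_bound (p C : ℝ) (hp₁ : 1 < p) (hC : 0 < C)
    (m : E → ℝ) (g : Fin d → E → ℝ)
    (hderiv : ∀ (s : Fin d) (x : E), HasLineDerivAt ℝ m (g s x) x (EuclideanSpace.single s 1))
    (hHolder : ∀ (s : Fin d) (x z : E), |g s x - g s z| ≤ C * ‖x - z‖ ^ (p - 1))
    (xx zz : E) :
    |m zz - m xx - ∑ s : Fin d, (zz s - xx s) * g s xx|
      ≤ (∑ s : Fin d, |zz s - xx s|) * (C * ‖zz - xx‖ ^ (p - 1)) := by
  classical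
  set y : ℕ → E := fun j => WithLp.toLp 2 (fun t : Fin d => if (t : ℕ) < j then zz t else xx t : Fin d → ℝ)
    with hy
  have hy0 : y 0 = xx := by ext t; simp [hy]
  have hyd : y d = zz := by ext t; simp [hy, t.isLt]
  -- per-coordinate step with intermediate point
  have hstep : ∀ s : Fin d, ∃ ξ : E, ‖ξ - xx‖ ≤ ‖zz - xx‖ ∧
      m (y ((s : ℕ) + 1)) - m (y (s : ℕ)) = (zz s - xx s) * g s ξ := by
    intro s
    obtain ⟨c, hc2, hceq⟩ := key_step m g hderiv s (y (s : ℕ)) (zz s - xx s)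
    have hupd : y ((s : ℕ) + 1) = y (s : ℕ) + (zz s - xx s) • EuclideanSpace.single s 1 := by
      ext t
      by_cases hts : t = s
      · subst hts
        simp only [hy, PiLp.add_apply, PiLp.smul_apply, EuclideanSpace.single_apply,
          if_pos rfl, smul_eq_mul, mul_one, Nat.lt_succ_self, if_true, lt_irrefl, if_false]
        ring
      · have h1 : ((t : ℕ) < (s : ℕ) + 1) ↔ ((t : ℕ) < (s : ℕ)) := by
          constructor
          · intro h
            rcases Nat.lt_succ_iff_lt_or_eq.mp h with h | h
            · exact h
            · exact absurd (Fin.ext h) hts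
          · exact fun h => Nat.lt_succ_of_lt h
        simp [hy, PiLp.add_apply, PiLp.smul_apply, EuclideanSpace.single_apply, hts, h1]
        simp [le_iff_lt_or_eq, hts]
    refine ⟨y (s : ℕ) + c • EuclideanSpace.single s 1, ?_, by rw [hupd, hceq]⟩
    rw [EuclideanSpace.norm_eq, EuclideanSpace.norm_eq]
    apply Real.sqrt_le_sqrt
    apply Finset.sum_le_sum
    intro t _
    simp only [PiLp.sub_apply, PiLp.add_apply, PiLp.smul_apply, EuclideanSpace.single_apply,
      smul_eq_mul, Real.norm_eq_abs, sq_abs]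
    by_cases hts : t = s
    · subst hts
      simp only [if_pos rfl, mul_one, hy, lt_irrefl, if_false]
      simpa using hc2
    · simp only [hts, if_false, mul_zero, add_zero, hy]
      by_cases hlt : (t : ℕ) < (s : ℕ)
      · simp [hlt]
      · simp only [hlt, if_false]
        nlinarith [sq_nonneg (zz t - xx t)]
  choose ξ hξnorm hξeq using hstep
  have htel : m zz - m xx = ∑ s : Fin d, (m (y ((s : ℕ) + 1)) - m (y (s : ℕ))) := by
    rw [Fin.sum_univ_eq_sum_range (fun j => m (y (j + 1)) - m (y j)) d,
      Finset.sum_range_sub (fun j => m (y j)) d, hy0, hyd]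
  rw [htel, ← Finset.sum_sub_distrib]
  refine (Finset.abs_sum_le_sum_abs _ _).trans ?_
  rw [Finset.sum_mul]
  apply Finset.sum_le_sum
  intro s _
  rw [hξeq s, ← mul_sub, abs_mul]
  refine mul_le_mul_of_nonneg_left ?_ (abs_nonneg _)
  refine (hHolder s (ξ s) xx).trans ?_
  refine mul_le_mul_of_nonneg_left ?_ hC.le
  exact Real.rpow_le_rpow (norm_nonneg _) (hξnorm s) (by linarith)

lemma rpow_helper (a p : ℝ) (ha : 0 ≤ a) (hp : 1 < p) :
    (a ^ (p - 1)) ^ 2 * a ^ 2 = a ^ (2 * p) := by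
  rcases eq_or_lt_of_le ha with ha' | ha'
  · rw [← ha', Real.zero_rpow (by linarith), Real.zero_rpow (by linarith)]
    ring
  · rw [← Real.rpow_natCast (a ^ (p - 1)) 2, ← Real.rpow_natCast a 2,
      ← Real.rpow_mul ha, ← Real.rpow_add ha']
    congr 1
    push_cast
    ring

lemma sum_diag_univ {n : ℕ} (f : Fin n × Fin n → ℝ) :
    ∑ q ∈ (Finset.univ : Finset (Fin n)).diag, f q = ∑ i, f (i, i) := by
  have himg : (Finset.univ : Finset (Fin n)).diag = Finset.univ.image (fun i => (i, i)) := by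
    ext ⟨a, b⟩
    simp only [Finset.mem_diag, Finset.mem_image, Finset.mem_univ, true_and]
    constructor
    · rintro rfl; exact ⟨a, rfl⟩
    · rintro ⟨i, h⟩; cases h; rfl
  rw [himg, Finset.sum_image (fun i _ j _ h => (Prod.mk.inj h).1)]


/-- if `m` is `(p,C)`-smooth with `1 < p ≤ 2` (i.e. its first-order partial
derivatives `g s = m_s` exist and are `(p-1)`-Hölder with constant `C`) and
`max_s sup_{[0,1]^d} |m_s| ≤ L`, then for `x, z₁, …, z_k ∈ [0,1]^d`,
`(∑ᵢ (m(zᵢ) - m(x)))² ≤ 2kdC² ∑ᵢ ‖zᵢ-x‖^{2p} + 2dL² ∑ᵢ ‖zᵢ-x‖² +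
  2dL² ∑ₛ ∑_{i≠j} (zᵢ⁽ˢ⁾-x⁽ˢ⁾)(zⱼ⁽ˢ⁾-x⁽ˢ⁾)`. -/
theorem smooth_bias_bound (d k : ℕ) (p C L : ℝ) (hp₁ : 1 < p) (hp₂ : p ≤ 2)
    (hC : 0 < C) (hL : 0 < L)
    (m : EuclideanSpace ℝ (Fin d) → ℝ) (g : Fin d → EuclideanSpace ℝ (Fin d) → ℝ)
    (hderiv : ∀ (s : Fin d) (x : EuclideanSpace ℝ (Fin d)),
      HasLineDerivAt ℝ m (g s x) x (EuclideanSpace.single s 1))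
    (hHolder : ∀ (s : Fin d) (x z : EuclideanSpace ℝ (Fin d)),
      |g s x - g s z| ≤ C * ‖x - z‖ ^ (p - 1))
    (hLbound : ∀ s : Fin d, ∀ x ∈ unitCube d, |g s x| ≤ L)
    (x : EuclideanSpace ℝ (Fin d)) (hx : x ∈ unitCube d)
    (z : Fin k → EuclideanSpace ℝ (Fin d)) (hz : ∀ i, z i ∈ unitCube d) :
    (∑ i, (m (z i) - m x)) ^ 2 ≤
      2 * (k : ℝ) * (d : ℝ) * C ^ 2 * ∑ i, ‖z i - x‖ ^ (2 * p) +
        2 * (d : ℝ) * L ^ 2 * ∑ i, ‖z i - x‖ ^ 2 +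
        2 * (d : ℝ) * L ^ 2 *
          ∑ s : Fin d, ∑ q ∈ (Finset.univ : Finset (Fin k)).offDiag,
            (z q.1 s - x s) * (z q.2 s - x s) := by
  classical
  have hnorm : ∀ i, ‖z i - x‖ ^ 2 = ∑ s, (z i s - x s) ^ 2 := by
    intro i
    rw [EuclideanSpace.norm_eq, Real.sq_sqrt (by positivity)]
    exact Finset.sum_congr rfl fun s _ => by
      rw [PiLp.sub_apply, Real.norm_eq_abs, sq_abs]
  set r : Fin k → ℝ := fun i => m (z i) - m x - ∑ s, (z i s - x s) * g s x with hrdef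
  set V : Fin d → ℝ := fun s => ∑ i, (z i s - x s) with hVdef
  -- bound on r i ^ 2
  have hr2 : ∀ i, r i ^ 2 ≤ (d : ℝ) * C ^ 2 * ‖z i - x‖ ^ (2 * p) := by
    intro i
    have h1 : |r i| ≤ (∑ s, |z i s - x s|) * (C * ‖z i - x‖ ^ (p - 1)) :=
      key_bound p C hp₁ hC m g hderiv hHolder x (z i)
    have h2 : (∑ s, |z i s - x s|) ^ 2 ≤ (d : ℝ) * ‖z i - x‖ ^ 2 := by
      rw [hnorm i]
      simpa [Finset.card_univ, sq_abs] using
        sq_sum_le_card_mul_sum_sq (s := Finset.univ) (f := fun s => |z i s - x s|)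
    calc r i ^ 2 = |r i| ^ 2 := (sq_abs _).symm
      _ ≤ ((∑ s, |z i s - x s|) * (C * ‖z i - x‖ ^ (p - 1))) ^ 2 :=
          pow_le_pow_left₀ (abs_nonneg _) h1 2
      _ = (∑ s, |z i s - x s|) ^ 2 * (C ^ 2 * (‖z i - x‖ ^ (p - 1)) ^ 2) := by ring
      _ ≤ ((d : ℝ) * ‖z i - x‖ ^ 2) * (C ^ 2 * (‖z i - x‖ ^ (p - 1)) ^ 2) := by
          apply mul_le_mul_of_nonneg_right h2
          positivity
      _ = (d : ℝ) * C ^ 2 * ((‖z i - x‖ ^ (p - 1)) ^ 2 * ‖z i - x‖ ^ 2) := by ring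
      _ = (d : ℝ) * C ^ 2 * ‖z i - x‖ ^ (2 * p) := by
          rw [rpow_helper _ _ (norm_nonneg _) hp₁]
  -- bound on (∑ r) ^ 2
  have hsumr : (∑ i, r i) ^ 2 ≤ (k : ℝ) * (d : ℝ) * C ^ 2 * ∑ i, ‖z i - x‖ ^ (2 * p) := by
    have h1 : (∑ i, r i) ^ 2 ≤ (k : ℝ) * ∑ i, r i ^ 2 := by
      simpa [Finset.card_univ] using
        sq_sum_le_card_mul_sum_sq (s := Finset.univ) (f := r)
    refine h1.trans ?_
    calc (k : ℝ) * ∑ i, r i ^ 2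
        ≤ (k : ℝ) * ∑ i, (d : ℝ) * C ^ 2 * ‖z i - x‖ ^ (2 * p) := by
          apply mul_le_mul_of_nonneg_left (Finset.sum_le_sum fun i _ => hr2 i)
            (Nat.cast_nonneg k)
      _ = (k : ℝ) * ((d : ℝ) * C ^ 2 * ∑ i, ‖z i - x‖ ^ (2 * p)) := by
          rw [← Finset.mul_sum]
      _ = (k : ℝ) * (d : ℝ) * C ^ 2 * ∑ i, ‖z i - x‖ ^ (2 * p) := by ring
  -- decomposition
  have hBrw : (∑ i, (m (z i) - m x)) = (∑ i, r i) + ∑ s, g s x * V s := by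
    have h1 : ∀ i, m (z i) - m x = r i + ∑ s, (z i s - x s) * g s x := by
      intro i; rw [hrdef]; ring
    rw [Finset.sum_congr rfl fun i _ => h1 i, Finset.sum_add_distrib]
    congr 1
    rw [Finset.sum_comm]
    refine Finset.sum_congr rfl fun s _ => ?_
    simp only [hVdef]
    rw [← Finset.sum_mul, mul_comm]
  -- bound on B ^ 2
  have hgb : ∀ s, (g s x) ^ 2 ≤ L ^ 2 := by
    intro s
    have h := hLbound s x hx
    nlinarith [abs_nonneg (g s x), sq_abs (g s x)]
  have hBsq : (∑ s, g s x * V s) ^ 2 ≤ (d : ℝ) * L ^ 2 * ∑ s, V s ^ 2 := by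
    have h1 : (∑ s, g s x * V s) ^ 2 ≤ (d : ℝ) * ∑ s, (g s x * V s) ^ 2 := by
      simpa [Finset.card_univ] using
        sq_sum_le_card_mul_sum_sq (s := Finset.univ) (f := fun s => g s x * V s)
    refine h1.trans ?_
    rw [mul_assoc]
    apply mul_le_mul_of_nonneg_left _ (Nat.cast_nonneg d)
    rw [Finset.mul_sum]
    refine Finset.sum_le_sum fun s _ => ?_
    rw [mul_pow]
    exact mul_le_mul_of_nonneg_right (hgb s) (sq_nonneg _)
  -- identity for ∑ V s ^ 2
  have hVsq : ∑ s, V s ^ 2 = (∑ i, ‖z i - x‖ ^ 2) +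
      ∑ s : Fin d, ∑ q ∈ (Finset.univ : Finset (Fin k)).offDiag,
        (z q.1 s - x s) * (z q.2 s - x s) := by
    have h1 : ∀ s, V s ^ 2 = (∑ i, (z i s - x s) ^ 2) +
        ∑ q ∈ (Finset.univ : Finset (Fin k)).offDiag, (z q.1 s - x s) * (z q.2 s - x s) := by
      intro s
      have hA : ∑ q ∈ (Finset.univ ×ˢ Finset.univ : Finset (Fin k × Fin k)),
          (z q.1 s - x s) * (z q.2 s - x s) = V s ^ 2 := by
        simp only [hVdef]
        rw [sq, Finset.sum_mul_sum, Finset.sum_product]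
      rw [← hA, ← Finset.diag_union_offDiag (Finset.univ : Finset (Fin k)),
        Finset.sum_union (Finset.disjoint_diag_offDiag _),
        sum_diag_univ (fun q => (z q.1 s - x s) * (z q.2 s - x s))]
      simp [sq]
    rw [Finset.sum_congr rfl fun s _ => h1 s, Finset.sum_add_distrib]
    congr 1
    rw [Finset.sum_comm]
    exact Finset.sum_congr rfl fun i _ => (hnorm i).symm
  -- final assembly
  rw [hBrw]
  have hsq : ((∑ i, r i) + ∑ s, g s x * V s) ^ 2
      ≤ 2 * (∑ i, r i) ^ 2 + 2 * (∑ s, g s x * V s) ^ 2 := by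
    nlinarith [sq_nonneg ((∑ i, r i) - ∑ s, g s x * V s)]
  have h2B : 2 * (∑ s, g s x * V s) ^ 2 ≤ 2 * ((d : ℝ) * L ^ 2 * ∑ s, V s ^ 2) := by
    linarith [hBsq]
  rw [hVsq] at h2B
  nlinarith [hsumr, hsq, h2B]
end
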